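/- (Self-duality of the T-PSD cone) A symmetric tensor A ∈ ℝ^{n×n×p} is T-positive semidefinite if and only if ⟨A, B⟩ ≥ 0 for every symmetric T-positive semidefinite tensor B ∈ ℝ^{n×n×p}. In other words, the cone of symmetric T-PSD tensors equals its dual cone within the space of symmetric tensors. -/

import Mathlib

open Matrix BigOperators

variable {p : ℕ}

/-- Block circulant matrix of a third-order tensor (tensor = family of frontal slices). -/
def bcirc {I J : Type*} (A : Fin p → Matrix I J ℝ) :
    Matrix (Fin p × I) (Fin p × J) ℝ :=
  Matrix.of fun ik jl => A (ik.1 - jl.1) ik.2 jl.2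

/-- T-product of third-order tensors: `(A*B)^(k) = Σ_j A^(k-j) B^(j)` (indices mod p),
which is exactly `fold(bcirc(A) · unfold(B))`. -/
def tProd {I J K : Type*} [Fintype J] (A : Fin p → Matrix I J ℝ)
    (B : Fin p → Matrix J K ℝ) : Fin p → Matrix I K ℝ :=
  fun k => ∑ j : Fin p, A (k - j) * B j

/-- Tensor transpose: transpose each frontal slice and reverse slices 2..p. -/
def ttrans {I J : Type*} (A : Fin p → Matrix I J ℝ) :
    Fin p → Matrix J I ℝ :=
  fun k => (A (-k))ᵀ

/-- Identity tensor: first frontal slice the identity matrix, other slices zero. -/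
def tid (I : Type*) [DecidableEq I] [NeZero p] : Fin p → Matrix I I ℝ :=
  fun k => if k = 0 then 1 else 0

/-- Entrywise (Frobenius) inner product of third-order tensors. -/
def tinner {I J : Type*} [Fintype I] [Fintype J]
    (X Y : Fin p → Matrix I J ℝ) : ℝ :=
  ∑ k, ∑ i, ∑ j, X k i j * Y k i j

/-- Symmetric T-positive semidefinite tensor. -/
def TPSD {I : Type*} [Fintype I] (A : Fin p → Matrix I I ℝ) : Prop :=
  ttrans A = A ∧ ∀ X : Fin p → Matrix I (Fin 1) ℝ, 0 ≤ tinner X (tProd A X)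

/-- Symmetric T-positive definite tensor. -/
def TPD {I : Type*} [Fintype I] (A : Fin p → Matrix I I ℝ) : Prop :=
  ttrans A = A ∧ ∀ X : Fin p → Matrix I (Fin 1) ℝ, X ≠ 0 → 0 < tinner X (tProd A X)

/-- k-fold T-product power of a tensor, with `tpow A 0` the identity tensor. -/
def tpow {I : Type*} [Fintype I] [DecidableEq I] [NeZero p]
    (A : Fin p → Matrix I I ℝ) : ℕ → Fin p → Matrix I I ℝ
  | 0 => tid I
  | k + 1 => tProd A (tpow A k)

section aux
variable {n : ℕ}

def vec (X : Fin p → Matrix (Fin n) (Fin 1) ℝ) : Fin p × Fin n → ℝ :=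
  fun ki => X ki.1 ki.2 0

lemma quad_eq (A : Fin p → Matrix (Fin n) (Fin n) ℝ) (X : Fin p → Matrix (Fin n) (Fin 1) ℝ) :
    tinner X (tProd A X) = _root_.vec X ⬝ᵥ (bcirc A) *ᵥ (_root_.vec X) := by
  simp only [tinner, tProd, dotProduct, mulVec, bcirc, _root_.vec, Matrix.sum_apply,
    Matrix.mul_apply, Fintype.sum_prod_type, Finset.mul_sum, Finset.sum_mul,
    Matrix.of_apply, Fin.sum_univ_one]


lemma bcirc_herm [NeZero p] (A : Fin p → Matrix (Fin n) (Fin n) ℝ) (hA : ttrans A = A) :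
    (bcirc A).IsHermitian := by
  ext ⟨k, i⟩ ⟨l, j⟩
  have h := congrFun hA (k - l)
  have := congrFun (congrFun h i) j
  simp only [ttrans, transpose_apply, neg_sub] at this
  simp [conjTranspose_apply, bcirc, ← this]

lemma tpsd_quad_iff [NeZero p] (A : Fin p → Matrix (Fin n) (Fin n) ℝ) :
    (∀ X : Fin p → Matrix (Fin n) (Fin 1) ℝ, 0 ≤ tinner X (tProd A X)) ↔
      (∀ x : Fin p × Fin n → ℝ, 0 ≤ x ⬝ᵥ (bcirc A) *ᵥ x) := by
  constructor
  · intro h x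
    have := h (fun k => Matrix.of fun i _ => x (k, i))
    rwa [quad_eq] at this
  · intro h X
    rw [quad_eq]
    exact h _

lemma trace_eq [NeZero p] (A B : Fin p → Matrix (Fin n) (Fin n) ℝ) (hB : ttrans B = B) :
    Matrix.trace (bcirc A * bcirc B) = (p : ℝ) * tinner A B := by
  have hB' : ∀ m i j, B m i j = B (-m) j i := by
    intro m i j
    conv_lhs => rw [← hB]
    simp [ttrans]
  simp only [Matrix.trace, Matrix.diag, Matrix.mul_apply, bcirc, Matrix.of_apply,
    Fintype.sum_prod_type, tinner]
  have step1 : (∑ k : Fin p, ∑ i : Fin n, ∑ l : Fin p, ∑ j : Fin n,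
        A (k - l) i j * B (l - k) j i)
      = ∑ k : Fin p, ∑ i : Fin n, ∑ m : Fin p, ∑ j : Fin n, A m i j * B m i j := by
    refine Finset.sum_congr rfl fun k _ => Finset.sum_congr rfl fun i _ => ?_
    refine Fintype.sum_equiv (Equiv.subLeft k) _ _ fun l => ?_
    simp only [Equiv.subLeft_apply]
    refine Finset.sum_congr rfl fun j _ => ?_
    rw [hB' (l - k) j i, neg_sub]
  rw [step1, Finset.sum_const, Finset.card_univ, Fintype.card_fin, nsmul_eq_mul]
  congr 1
  rw [Finset.sum_comm]

lemma bcirc_mul {I J K : Type*} [Fintype J] [NeZero p] (A : Fin p → Matrix I J ℝ)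
    (B : Fin p → Matrix J K ℝ) : bcirc (tProd A B) = bcirc A * bcirc B := by
  ext ⟨k, i⟩ ⟨l, j⟩
  simp only [bcirc, Matrix.of_apply, tProd, Matrix.sum_apply, Matrix.mul_apply,
    Fintype.sum_prod_type]
  refine Fintype.sum_equiv (Equiv.addRight l) _ _ fun m => ?_
  simp only [Equiv.coe_addRight, add_sub_cancel_right]
  refine Finset.sum_congr rfl fun a _ => ?_
  rw [sub_sub, add_comm m l]

lemma bcirc_ttrans {I J : Type*} [NeZero p] (A : Fin p → Matrix I J ℝ) :
    bcirc (ttrans A) = (bcirc A)ᵀ := by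
  ext ⟨k, j⟩ ⟨l, i⟩
  simp [bcirc, ttrans, neg_sub]

lemma ttrans_ttrans {I J : Type*} (A : Fin p → Matrix I J ℝ) : ttrans (ttrans A) = A := by
  funext k
  simp [ttrans]

lemma ttrans_tProd {I J K : Type*} [Fintype J] [NeZero p] (A : Fin p → Matrix I J ℝ)
    (B : Fin p → Matrix J K ℝ) : ttrans (tProd A B) = tProd (ttrans B) (ttrans A) := by
  funext k
  simp only [ttrans, tProd, Matrix.transpose_sum, Matrix.transpose_mul]
  refine Fintype.sum_equiv (Equiv.addRight k) _ _ fun j => ?_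
  simp only [Equiv.coe_addRight, add_sub_cancel_right]
  have h1 : -(k - (j + k)) = j := by abel
  have h2 : -(j + k) = -k - j := by abel
  rw [h1, h2]

lemma tinner_outer [NeZero p] (A : Fin p → Matrix (Fin n) (Fin n) ℝ)
    (X : Fin p → Matrix (Fin n) (Fin 1) ℝ) :
    tinner A (tProd X (ttrans X)) = tinner X (tProd A X) := by
  have main : (∑ m : Fin p, ∑ l : Fin p, ∑ i : Fin n, ∑ j : Fin n,
        A m i j * X (m - l) i 0 * X (-l) j 0)
      = ∑ k : Fin p, ∑ l : Fin p, ∑ i : Fin n, ∑ j : Fin n,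
        A (k - l) i j * X k i 0 * X l j 0 := by
    have step1 : ∀ m : Fin p, (∑ l : Fin p, ∑ i : Fin n, ∑ j : Fin n,
          A m i j * X (m - l) i 0 * X (-l) j 0)
        = ∑ l : Fin p, ∑ i : Fin n, ∑ j : Fin n,
          A m i j * X (m + l) i 0 * X l j 0 := fun m =>
      Fintype.sum_equiv (Equiv.neg _) _ _ fun l => by simp [sub_eq_add_neg]
    have step3 : ∀ l : Fin p, (∑ k : Fin p, ∑ i : Fin n, ∑ j : Fin n,
          A (k - l) i j * X k i 0 * X l j 0)
        = ∑ m : Fin p, ∑ i : Fin n, ∑ j : Fin n,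
          A m i j * X (m + l) i 0 * X l j 0 := fun l =>
      Fintype.sum_equiv (Equiv.subRight l) _ _ fun k => by simp
    calc (∑ m : Fin p, ∑ l : Fin p, ∑ i : Fin n, ∑ j : Fin n,
            A m i j * X (m - l) i 0 * X (-l) j 0)
        = ∑ m : Fin p, ∑ l : Fin p, ∑ i : Fin n, ∑ j : Fin n,
            A m i j * X (m + l) i 0 * X l j 0 :=
          Finset.sum_congr rfl fun m _ => step1 m
      _ = ∑ l : Fin p, ∑ m : Fin p, ∑ i : Fin n, ∑ j : Fin n,
            A m i j * X (m + l) i 0 * X l j 0 := Finset.sum_comm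
      _ = ∑ l : Fin p, ∑ k : Fin p, ∑ i : Fin n, ∑ j : Fin n,
            A (k - l) i j * X k i 0 * X l j 0 :=
          Finset.sum_congr rfl fun l _ => (step3 l).symm
      _ = ∑ k : Fin p, ∑ l : Fin p, ∑ i : Fin n, ∑ j : Fin n,
            A (k - l) i j * X k i 0 * X l j 0 := Finset.sum_comm
  have hL : tinner A (tProd X (ttrans X)) = ∑ m : Fin p, ∑ l : Fin p, ∑ i : Fin n,
      ∑ j : Fin n, A m i j * X (m - l) i 0 * X (-l) j 0 := by
    simp only [tinner, tProd, ttrans, Matrix.sum_apply, Matrix.mul_apply, Fin.sum_univ_one,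
      Matrix.transpose_apply, Finset.mul_sum]
    refine Finset.sum_congr rfl fun m _ => ?_
    calc (∑ i : Fin n, ∑ j : Fin n, ∑ l : Fin p,
            A m i j * (X (m - l) i 0 * X (-l) j 0))
        = ∑ i : Fin n, ∑ l : Fin p, ∑ j : Fin n,
            A m i j * (X (m - l) i 0 * X (-l) j 0) :=
          Finset.sum_congr rfl fun i _ => Finset.sum_comm
      _ = ∑ l : Fin p, ∑ i : Fin n, ∑ j : Fin n,
            A m i j * (X (m - l) i 0 * X (-l) j 0) := Finset.sum_comm
      _ = ∑ l : Fin p, ∑ i : Fin n, ∑ j : Fin n,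
            A m i j * X (m - l) i 0 * X (-l) j 0 := by
          refine Finset.sum_congr rfl fun l _ => Finset.sum_congr rfl fun i _ =>
            Finset.sum_congr rfl fun j _ => by ring
  have hR : tinner X (tProd A X) = ∑ k : Fin p, ∑ l : Fin p, ∑ i : Fin n,
      ∑ j : Fin n, A (k - l) i j * X k i 0 * X l j 0 := by
    simp only [tinner, tProd, Matrix.sum_apply, Matrix.mul_apply, Fin.sum_univ_one,
      Finset.mul_sum]
    refine Finset.sum_congr rfl fun k _ => ?_
    calc (∑ i : Fin n, ∑ l : Fin p, ∑ j : Fin n,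
            X k i 0 * (A (k - l) i j * X l j 0))
        = ∑ l : Fin p, ∑ i : Fin n, ∑ j : Fin n,
            X k i 0 * (A (k - l) i j * X l j 0) := Finset.sum_comm
      _ = ∑ l : Fin p, ∑ i : Fin n, ∑ j : Fin n,
            A (k - l) i j * X k i 0 * X l j 0 := by
          refine Finset.sum_congr rfl fun l _ => Finset.sum_congr rfl fun i _ =>
            Finset.sum_congr rfl fun j _ => by ring
  rw [hL, hR, main]

lemma trace_mul_nonneg {m : Type*} [Fintype m] [DecidableEq m] {M N : Matrix m m ℝ}
    (hM : M.PosSemidef) (hN : N.PosSemidef) : 0 ≤ (M * N).trace := by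
  obtain ⟨C, rfl⟩ : ∃ C : Matrix m m ℝ, N = Cᴴ * C := by
    open scoped MatrixOrder in exact CStarAlgebra.nonneg_iff_eq_star_mul_self.mp hN.nonneg
  have hP : (C * M * Cᴴ).PosSemidef := hM.mul_mul_conjTranspose_same C
  have : (M * (Cᴴ * C)).trace = (C * M * Cᴴ).trace := by
    rw [← Matrix.mul_assoc, Matrix.trace_mul_comm, ← Matrix.mul_assoc]
  rw [this, Matrix.trace]
  refine Finset.sum_nonneg fun i _ => ?_
  have := hP.dotProduct_mulVec_nonneg (Pi.single i 1)
  simpa [Matrix.diag, Matrix.mulVec_single, dotProduct, Pi.single_apply] using this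

lemma tpsd_iff_posSemidef [NeZero p] (A : Fin p → Matrix (Fin n) (Fin n) ℝ)
    (hA : ttrans A = A) : TPSD A ↔ (bcirc A).PosSemidef := by
  constructor
  · rintro ⟨-, h⟩
    refine PosSemidef.of_dotProduct_mulVec_nonneg (bcirc_herm A hA) fun x => ?_
    simpa using (tpsd_quad_iff A).mp h x
  · intro h
    exact ⟨hA, (tpsd_quad_iff A).mpr fun x => by simpa using h.dotProduct_mulVec_nonneg x⟩

end aux

/-- self-duality of the T-PSD cone. -/
theorem tpsd_self_dual {n p : ℕ} (A : Fin p → Matrix (Fin n) (Fin n) ℝ)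
    (hA : ttrans A = A) :
    TPSD A ↔ ∀ B : Fin p → Matrix (Fin n) (Fin n) ℝ, TPSD B → 0 ≤ tinner A B := by
  rcases Nat.eq_zero_or_pos p with hp | hp
  · subst hp
    constructor
    · intro _ B _
      simp [tinner]
    · intro _
      exact ⟨hA, fun X => by simp [tinner]⟩
  · haveI : NeZero p := ⟨hp.ne'⟩
    constructor
    · intro hTA B hTB
      have hAP := (tpsd_iff_posSemidef A hA).mp hTA
      have hBP := (tpsd_iff_posSemidef B hTB.1).mp hTB
      have ht := trace_mul_nonneg hAP hBP
      rw [trace_eq A B hTB.1] at ht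
      have hp' : (0:ℝ) < p := by exact_mod_cast hp
      nlinarith
    · intro h
      refine ⟨hA, fun X => ?_⟩
      have hBsym : ttrans (tProd X (ttrans X)) = tProd X (ttrans X) := by
        rw [ttrans_tProd, ttrans_ttrans]
      have hBP : TPSD (tProd X (ttrans X)) := by
        refine (tpsd_iff_posSemidef _ hBsym).mpr ?_
        rw [bcirc_mul, bcirc_ttrans]
        have hct : (bcirc X)ᵀ = (bcirc X)ᴴ := by
          ext a b
          simp [Matrix.conjTranspose_apply]
        rw [hct]
        exact Matrix.posSemidef_self_mul_conjTranspose _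
      have h0 := h (tProd X (ttrans X)) hBP
      rwa [tinner_outer A X] at h0
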